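/- Let c : ℕ → ℕ satisfy c 2 = 1, c 3 = 2, and c n = ⌊n/2⌋·⌈n/2⌉ + c ⌈n/2⌉ for n > 3. Then for all n ≥ 2, c n = (n² - n)/2 - ⌊log₂(n-1)⌋ - Σ_{j=2}^{⌊(n-2)/2⌋} j·⌊1 + log₂((n-1)/(2j+1))⌋, where logarithms of rationals x are interpreted so that ⌊log₂ x⌋ is the greatest integer k with 2^k ≤ x. -/

import Mathlib

private def R (n : ℕ) : ℤ :=
  ((n : ℤ) ^ 2 - n) / 2 - (Nat.log 2 (n - 1) : ℤ) -
    ∑ j ∈ Finset.Icc 2 ((n - 2) / 2),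
      (j : ℤ) * (1 + (Nat.log 2 ((n - 1) / (2 * j + 1)) : ℤ))

private lemma log2_step {x : ℕ} (h : 2 ≤ x) : Nat.log 2 x = Nat.log 2 (x / 2) + 1 := by
  have h1 := Nat.log_div_base 2 x
  have h2 : 0 < Nat.log 2 x := Nat.log_pos one_lt_two h
  omega

private lemma gauss : ∀ K : ℕ, 1 ≤ K →
    2 * ∑ j ∈ Finset.Ioc 1 K, (j : ℤ) = (K : ℤ) * K + K - 2 := by
  intro K
  induction K with
  | zero => intro h; omega
  | succ k ihk =>
    intro _
    rcases Nat.eq_zero_or_pos k with hk | hk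
    · subst hk; simp
    · rw [Finset.sum_Ioc_succ_top hk]
      have := ihk hk
      push_cast
      ring_nf
      ring_nf at this
      linarith

private lemma sum_split (f : ℕ → ℤ) {a b c : ℕ} (hab : a ≤ b) (hbc : b ≤ c) :
    ∑ j ∈ Finset.Ioc a c, f j =
      (∑ j ∈ Finset.Ioc a b, f j) + ∑ j ∈ Finset.Ioc b c, f j := by
  rw [← Finset.Ioc_union_Ioc_eq_Ioc hab hbc, Finset.sum_union]
  rw [Finset.disjoint_left]
  intro x hx hx'
  simp only [Finset.mem_Ioc] at hx hx'
  omega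

set_option maxHeartbeats 1000000 in
private lemma key (n : ℕ) (hn : 4 ≤ n) :
    R n = ((n / 2 : ℕ) : ℤ) * (((n + 1) / 2 : ℕ) : ℤ) + R ((n + 1) / 2) := by
  have hm1 : (n + 1) / 2 - 1 = (n - 1) / 2 := by omega
  have hlog : (Nat.log 2 (n - 1) : ℤ) = (Nat.log 2 ((n + 1) / 2 - 1) : ℤ) + 1 := by
    rw [hm1]
    have := log2_step (show 2 ≤ n - 1 by omega)
    push_cast [this]
    ring
  have hB1 : (1 : ℕ) ≤ max (((n + 1) / 2 - 2) / 2) 1 := le_max_right _ _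
  have hBK : max (((n + 1) / 2 - 2) / 2) 1 ≤ (n - 2) / 2 := by omega
  have hsplit : ∑ j ∈ Finset.Icc 2 ((n - 2) / 2),
        (j : ℤ) * (1 + (Nat.log 2 ((n - 1) / (2 * j + 1)) : ℤ))
      = (∑ j ∈ Finset.Icc 2 (((n + 1) / 2 - 2) / 2),
          (j : ℤ) * (1 + (Nat.log 2 (((n + 1) / 2 - 1) / (2 * j + 1)) : ℤ)))
        + ∑ j ∈ Finset.Ioc 1 ((n - 2) / 2), (j : ℤ) := by
    rw [show Finset.Icc 2 ((n - 2) / 2) = Finset.Ioc 1 ((n - 2) / 2) by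
      ext x; simp only [Finset.mem_Icc, Finset.mem_Ioc]; omega]
    rw [sum_split _ hB1 hBK, sum_split (fun j => (j : ℤ)) hB1 hBK]
    have h1 : ∑ j ∈ Finset.Ioc 1 (max (((n + 1) / 2 - 2) / 2) 1),
          (j : ℤ) * (1 + (Nat.log 2 ((n - 1) / (2 * j + 1)) : ℤ))
        = (∑ j ∈ Finset.Icc 2 (((n + 1) / 2 - 2) / 2),
            (j : ℤ) * (1 + (Nat.log 2 (((n + 1) / 2 - 1) / (2 * j + 1)) : ℤ)))
          + ∑ j ∈ Finset.Ioc 1 (max (((n + 1) / 2 - 2) / 2) 1), (j : ℤ) := by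
      rw [show Finset.Icc 2 (((n + 1) / 2 - 2) / 2)
            = Finset.Ioc 1 (max (((n + 1) / 2 - 2) / 2) 1) by
        ext x; simp only [Finset.mem_Icc, Finset.mem_Ioc]; omega]
      rw [← Finset.sum_add_distrib]
      apply Finset.sum_congr rfl
      intro j hj
      simp only [Finset.mem_Ioc] at hj
      have hjK' : j ≤ ((n + 1) / 2 - 2) / 2 := by omega
      have hd : ((n + 1) / 2 - 1) / (2 * j + 1) = ((n - 1) / (2 * j + 1)) / 2 := by
        rw [hm1, Nat.div_div_eq_div_mul, Nat.div_div_eq_div_mul, Nat.mul_comm]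
      have h2le : 2 ≤ (n - 1) / (2 * j + 1) := by
        rw [Nat.le_div_iff_mul_le (by omega)]
        omega
      rw [hd, log2_step h2le]
      push_cast
      ring
    have h2 : ∑ j ∈ Finset.Ioc (max (((n + 1) / 2 - 2) / 2) 1) ((n - 2) / 2),
          (j : ℤ) * (1 + (Nat.log 2 ((n - 1) / (2 * j + 1)) : ℤ))
        = ∑ j ∈ Finset.Ioc (max (((n + 1) / 2 - 2) / 2) 1) ((n - 2) / 2), (j : ℤ) := by
      apply Finset.sum_congr rfl
      intro j hj
      simp only [Finset.mem_Ioc] at hj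
      have : (n - 1) / (2 * j + 1) = 1 := by
        apply Nat.div_eq_of_lt_le
        · omega
        · omega
      rw [this]
      simp
    rw [h1, h2]
    ring
  unfold R
  rw [hsplit, hlog]
  have hK1 : 1 ≤ (n - 2) / 2 := by omega
  have hg := gauss ((n - 2) / 2) hK1
  obtain ⟨t, ht⟩ : ∃ t, n = 4 * t + 4 ∨ n = 4 * t + 5 ∨ n = 4 * t + 6 ∨ n = 4 * t + 7 :=
    ⟨(n - 4) / 4, by omega⟩
  set S := ∑ j ∈ Finset.Icc 2 (((n + 1) / 2 - 2) / 2),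
      (j : ℤ) * (1 + (Nat.log 2 (((n + 1) / 2 - 1) / (2 * j + 1)) : ℤ)) with hS
  set G := ∑ j ∈ Finset.Ioc 1 ((n - 2) / 2), (j : ℤ) with hG
  set L := (Nat.log 2 ((n + 1) / 2 - 1) : ℤ) with hL
  clear_value S G L
  rcases ht with h | h | h | h <;> subst h <;> push_cast at hg ⊢
  · rw [show (4 * (t:ℤ) + 2) / 2 = 2 * t + 1 from by omega] at hg
    rw [show (4 * (t:ℤ) + 4) / 2 = 2 * t + 2 from by omega,
      show (4 * (t:ℤ) + 4 + 1) / 2 = 2 * t + 2 from by omega,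
      show ((4 * (t:ℤ) + 4) ^ 2 - (4 * t + 4)) = 2 * (8 * t ^ 2 + 14 * t + 6) from by ring,
      show ((2 * (t:ℤ) + 2) ^ 2 - (2 * t + 2)) = 2 * (2 * t ^ 2 + 3 * t + 1) from by ring,
      Int.mul_ediv_cancel_left _ two_ne_zero, Int.mul_ediv_cancel_left _ two_ne_zero]
    nlinarith [hg]
  · rw [show (4 * (t:ℤ) + 3) / 2 = 2 * t + 1 from by omega] at hg
    rw [show (4 * (t:ℤ) + 5) / 2 = 2 * t + 2 from by omega,
      show (4 * (t:ℤ) + 5 + 1) / 2 = 2 * t + 3 from by omega,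
      show ((4 * (t:ℤ) + 5) ^ 2 - (4 * t + 5)) = 2 * (8 * t ^ 2 + 18 * t + 10) from by ring,
      show ((2 * (t:ℤ) + 3) ^ 2 - (2 * t + 3)) = 2 * (2 * t ^ 2 + 5 * t + 3) from by ring,
      Int.mul_ediv_cancel_left _ two_ne_zero, Int.mul_ediv_cancel_left _ two_ne_zero]
    nlinarith [hg]
  · rw [show (4 * (t:ℤ) + 4) / 2 = 2 * t + 2 from by omega] at hg
    rw [show (4 * (t:ℤ) + 6) / 2 = 2 * t + 3 from by omega,
      show (4 * (t:ℤ) + 6 + 1) / 2 = 2 * t + 3 from by omega,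
      show ((4 * (t:ℤ) + 6) ^ 2 - (4 * t + 6)) = 2 * (8 * t ^ 2 + 22 * t + 15) from by ring,
      show ((2 * (t:ℤ) + 3) ^ 2 - (2 * t + 3)) = 2 * (2 * t ^ 2 + 5 * t + 3) from by ring,
      Int.mul_ediv_cancel_left _ two_ne_zero, Int.mul_ediv_cancel_left _ two_ne_zero]
    nlinarith [hg]
  · rw [show (4 * (t:ℤ) + 5) / 2 = 2 * t + 2 from by omega] at hg
    rw [show (4 * (t:ℤ) + 7) / 2 = 2 * t + 3 from by omega,
      show (4 * (t:ℤ) + 7 + 1) / 2 = 2 * t + 4 from by omega,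
      show ((4 * (t:ℤ) + 7) ^ 2 - (4 * t + 7)) = 2 * (8 * t ^ 2 + 26 * t + 21) from by ring,
      show ((2 * (t:ℤ) + 4) ^ 2 - (2 * t + 4)) = 2 * (2 * t ^ 2 + 7 * t + 6) from by ring,
      Int.mul_ediv_cancel_left _ two_ne_zero, Int.mul_ediv_cancel_left _ two_ne_zero]
    nlinarith [hg]

theorem stmt10 (c : ℕ → ℕ) (hc2 : c 2 = 1) (hc3 : c 3 = 2)
    (hrec : ∀ n, 3 < n → c n = (n / 2) * ((n + 1) / 2) + c ((n + 1) / 2)) :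
    ∀ n, 2 ≤ n →
      (c n : ℤ) = ((n : ℤ) ^ 2 - n) / 2 - (Nat.log 2 (n - 1) : ℤ) -
        ∑ j ∈ Finset.Icc 2 ((n - 2) / 2),
          (j : ℤ) * (1 + (Nat.log 2 ((n - 1) / (2 * j + 1)) : ℤ)) := by
  intro n
  induction n using Nat.strong_induction_on with
  | _ n ih =>
    intro hn
    show (c n : ℤ) = R n
    rcases lt_or_ge n 4 with h4 | h4
    · interval_cases n
      · rw [hc2]; unfold R; norm_num
      · rw [hc3]; unfold R
        rw [show Nat.log 2 (3 - 1) = 1 from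
          Nat.log_eq_of_pow_le_of_lt_pow (by norm_num) (by norm_num)]
        norm_num
    · rw [hrec n h4, key n h4]
      push_cast
      rw [ih ((n + 1) / 2) (by omega) (by omega)]
      rfl
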